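/- Suppose Φ_1 and Φ_2 are Fourier transforms of probability densities f_1, f_2 on ℝ satisfying |Φ_i(u)| ≥ A|u|^{-β'} for |u| large (i = 1, 2), for some constants A > 0 and β' > 0. If Φ_1(u) e^{-|u|^{s_1}} = Φ_2(u) e^{-|u|^{s_2}} for all u ∈ ℝ, where s_1, s_2 > 0, then s_1 = s_2 and Φ_1 = Φ_2. -/

import Mathlib

open Filter Asymptotics Real

lemma aux_no_lt (Φ₁ Φ₂ : ℝ → ℂ) (A β' s₁ s₂ : ℝ)
    (hA : 0 < A) (hβ' : 0 < β') (hs₂ : 0 < s₂)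
    (hbd₂ : ∀ u : ℝ, ‖Φ₂ u‖ ≤ 1)
    (hlow₁ : ∃ C > (0:ℝ), ∀ u : ℝ, C ≤ |u| → A * |u| ^ (-β') ≤ ‖Φ₁ u‖)
    (heq : ∀ u : ℝ, Φ₁ u * Complex.exp ((-(|u| ^ s₁) : ℝ) : ℂ)
        = Φ₂ u * Complex.exp ((-(|u| ^ s₂) : ℝ) : ℂ))
    (hlt : s₁ < s₂) : False := by
  obtain ⟨C, hC, hlow⟩ := hlow₁
  -- little-o : u^s₁ + β'·log u  =o  u^s₂
  have h₁ : (fun u : ℝ => u ^ s₁) =o[atTop] (fun u : ℝ => u ^ s₂) := by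
    apply isLittleO_of_tendsto'
    · filter_upwards [eventually_gt_atTop (0:ℝ)] with u hu h
      exact absurd h (rpow_pos_of_pos hu s₂).ne'
    · have := tendsto_rpow_neg_atTop (y := s₂ - s₁) (by linarith)
      refine this.congr' ?_
      filter_upwards [eventually_gt_atTop (0:ℝ)] with u hu
      rw [← Real.rpow_sub hu]
      ring_nf
  have h₂ : (fun u : ℝ => β' * Real.log u) =o[atTop] (fun u : ℝ => u ^ s₂) :=
    (isLittleO_log_rpow_atTop hs₂).const_mul_left β'
  have hlo := (h₁.add h₂).def (by norm_num : (0:ℝ) < 1/2)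
  have hbig : ∀ᶠ u : ℝ in atTop, (-Real.log A + 1) ≤ (1/2) * u ^ s₂ := by
    have := (tendsto_rpow_atTop hs₂).const_mul_atTop (by norm_num : (0:ℝ) < 1/2)
    exact this.eventually_ge_atTop _
  obtain ⟨u, hu⟩ := (((hlo.and hbig).and (eventually_ge_atTop (max C 1))).and
    (eventually_gt_atTop (0:ℝ))).exists
  obtain ⟨⟨⟨hlo, hbig⟩, huC⟩, hu0⟩ := hu
  have hu1 : (1:ℝ) ≤ u := le_trans (le_max_right _ _) huC
  have habs : |u| = u := abs_of_pos hu0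
  -- key strict inequality : u^s₁ - u^s₂ < log A - β' log u
  have hkey : u ^ s₁ - u ^ s₂ < Real.log A - β' * Real.log u := by
    have h3 : u ^ s₁ + β' * Real.log u ≤ (1/2) * u ^ s₂ := by
      have := hlo
      simp only [Real.norm_eq_abs] at this
      calc u ^ s₁ + β' * Real.log u ≤ |u ^ s₁ + β' * Real.log u| := le_abs_self _
        _ ≤ (1/2) * |u ^ s₂| := this
        _ = (1/2) * u ^ s₂ := by rw [abs_of_pos (rpow_pos_of_pos hu0 s₂)]
    nlinarith [hbig]
  -- from heq : ‖Φ₁ u‖ ≤ exp (u^s₁ - u^s₂)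
  have hnorm : ‖Φ₁ u‖ ≤ Real.exp (u ^ s₁ - u ^ s₂) := by
    have := congrArg norm (heq u)
    simp only [norm_mul, Complex.norm_exp] at this
    simp only [Complex.ofReal_re, habs] at this
    have h2 : ‖Φ₂ u‖ * Real.exp (-(u ^ s₂)) ≤ Real.exp (-(u ^ s₂)) := by
      nlinarith [Real.exp_pos (-(u ^ s₂)), hbd₂ u, norm_nonneg (Φ₂ u)]
    have := this.trans_le h2
    calc ‖Φ₁ u‖ = ‖Φ₁ u‖ * Real.exp (-(u ^ s₁)) / Real.exp (-(u ^ s₁)) := by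
          field_simp
      _ ≤ Real.exp (-(u ^ s₂)) / Real.exp (-(u ^ s₁)) := by
          gcongr
      _ = Real.exp (u ^ s₁ - u ^ s₂) := by
          rw [← Real.exp_sub]; ring_nf
  -- lower bound
  have hAu : A * u ^ (-β') ≤ ‖Φ₁ u‖ := by
    have := hlow u (by rw [habs]; exact le_trans (le_max_left _ _) huC)
    rwa [habs] at this
  have hexp : Real.exp (u ^ s₁ - u ^ s₂) < A * u ^ (-β') := by
    have : Real.exp (u ^ s₁ - u ^ s₂) < Real.exp (Real.log A - β' * Real.log u) :=
      Real.exp_lt_exp.mpr hkey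
    calc Real.exp (u ^ s₁ - u ^ s₂) < Real.exp (Real.log A - β' * Real.log u) := this
      _ = A * u ^ (-β') := by
          rw [Real.exp_sub, Real.exp_log hA, ← Real.log_rpow hu0 β', Real.exp_log
            (rpow_pos_of_pos hu0 _), Real.rpow_neg hu0.le, div_eq_mul_inv]
  linarith [hAu.trans hnorm]

/-- Identifiability in the convolution model with stable noise: if two Fourier
transforms of densities (bounded by 1, with polynomial lower bounds at infinity)
satisfy `Φ₁(u) e^{-|u|^{s₁}} = Φ₂(u) e^{-|u|^{s₂}}`, then `s₁ = s₂` and `Φ₁ = Φ₂`. -/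
theorem stmt_2 (Φ₁ Φ₂ : ℝ → ℂ) (A β' s₁ s₂ : ℝ)
    (hA : 0 < A) (hβ' : 0 < β') (hs₁ : 0 < s₁) (hs₂ : 0 < s₂)
    (hbd₁ : ∀ u : ℝ, ‖Φ₁ u‖ ≤ 1) (hbd₂ : ∀ u : ℝ, ‖Φ₂ u‖ ≤ 1)
    (hlow₁ : ∃ C > (0:ℝ), ∀ u : ℝ, C ≤ |u| → A * |u| ^ (-β') ≤ ‖Φ₁ u‖)
    (hlow₂ : ∃ C > (0:ℝ), ∀ u : ℝ, C ≤ |u| → A * |u| ^ (-β') ≤ ‖Φ₂ u‖)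
    (heq : ∀ u : ℝ, Φ₁ u * Complex.exp ((-(|u| ^ s₁) : ℝ) : ℂ)
        = Φ₂ u * Complex.exp ((-(|u| ^ s₂) : ℝ) : ℂ)) :
    s₁ = s₂ ∧ Φ₁ = Φ₂ := by
  have hs : s₁ = s₂ := by
    rcases lt_trichotomy s₁ s₂ with h | h | h
    · exact absurd (aux_no_lt Φ₁ Φ₂ A β' s₁ s₂ hA hβ' hs₂ hbd₂ hlow₁ heq h) not_false
    · exact h
    · exact absurd (aux_no_lt Φ₂ Φ₁ A β' s₂ s₁ hA hβ' hs₁ hbd₁ hlow₂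
        (fun u => (heq u).symm) h) not_false
  subst hs
  refine ⟨rfl, funext fun u => ?_⟩
  exact mul_right_cancel₀ (Complex.exp_ne_zero _) (heq u)
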